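/- Let M, N ∈ rep(C_r) (r ≥ 3) be indecomposable, let x ∈ C_r^+ be a leaf of M and y ∈ C_r^- a leaf of N. Then there exists g ∈ G such that (N^g, M) is leaf-connected with connecting arrow x → g.y. -/

import Mathlib

open DirectSum

/-!
# Shared framework

Concrete finite-dimensional representations of the generalized Kronecker quiver `Γ_r`
(`KRep`) and of its universal covering quiver `C_r` (an `r`-regular tree with bipartite
orientation, `CrQuiver`/`CrRep`), together with an abstract layer
(`KroneckerAR`, `CoverAR`) for the Auslander–Reiten-theoretic notions
(AR translate, components, quasi-simplicity, quasi-length, preprojective/preinjective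
representations) that are not available in Mathlib.
-/

/-! ## Representations of the generalized Kronecker quiver `Γ_r` -/

/-- A finite-dimensional representation of the `r`-Kronecker quiver `Γ_r`
(two vertices `1, 2` and `r` arrows `γ_1, …, γ_r : 1 → 2`) over `k`. -/
structure KRep (k : Type) [Field k] (r : ℕ) where
  V1 : Type
  V2 : Type
  [a1 : AddCommGroup V1]
  [a2 : AddCommGroup V2]
  [m1 : Module k V1]
  [m2 : Module k V2]
  [f1 : FiniteDimensional k V1]
  [f2 : FiniteDimensional k V2]
  map : Fin r → V1 →ₗ[k] V2

attribute [instance] KRep.a1 KRep.a2 KRep.m1 KRep.m2 KRep.f1 KRep.f2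

namespace KRep

variable {k : Type} [Field k] {r : ℕ}

/-- Morphisms of representations of `Γ_r`. -/
structure Hom (M N : KRep k r) where
  f1 : M.V1 →ₗ[k] N.V1
  f2 : M.V2 →ₗ[k] N.V2
  comm : ∀ i, (N.map i).comp f1 = f2.comp (M.map i)

/-- Isomorphisms of representations of `Γ_r`. -/
structure Iso (M N : KRep k r) where
  e1 : M.V1 ≃ₗ[k] N.V1
  e2 : M.V2 ≃ₗ[k] N.V2
  comm : ∀ i, (N.map i).comp (e1 : M.V1 →ₗ[k] N.V1) = (e2 : M.V2 →ₗ[k] N.V2).comp (M.map i)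

/-- `M` is indecomposable: it is nonzero and its endomorphism ring has no nontrivial
idempotents. -/
def Indec (M : KRep k r) : Prop :=
  ((∃ v : M.V1, v ≠ 0) ∨ (∃ v : M.V2, v ≠ 0)) ∧
  ∀ f : Hom M M, f.f1.comp f.f1 = f.f1 → f.f2.comp f.f2 = f.f2 →
    (f.f1 = 0 ∧ f.f2 = 0) ∨ (f.f1 = LinearMap.id ∧ f.f2 = LinearMap.id)

/-- `rad(M, N) ≠ 0`: there is a nonzero non-invertible homomorphism `M → N`. -/
def radNe (M N : KRep k r) : Prop :=
  ∃ f : Hom M N, (f.f1 ≠ 0 ∨ f.f2 ≠ 0) ∧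
    ¬ (Function.Bijective f.f1 ∧ Function.Bijective f.f2)

/-- The equal kernels property: `M^α = Σ α_i M(γ_i)` is injective for all `α ≠ 0`. -/
def EKP (M : KRep k r) : Prop :=
  ∀ α : Fin r → k, α ≠ 0 → Function.Injective ⇑(∑ i, α i • M.map i)

/-- The equal images property: `M^α = Σ α_i M(γ_i)` is surjective for all `α ≠ 0`. -/
def EIP (M : KRep k r) : Prop :=
  ∀ α : Fin r → k, α ≠ 0 → Function.Surjective ⇑(∑ i, α i • M.map i)

/-- The dimension vector `(dim_k M_1, dim_k M_2)`. -/
noncomputable def dimVec (M : KRep k r) : ℕ × ℕ := (Module.finrank k M.V1, Module.finrank k M.V2)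

/-- The standard duality `D` on `rep(Γ_r)`:
`(DM)_1 = (M_2)^*`, `(DM)_2 = (M_1)^*`, `(DM)(γ_i) = M(γ_i)^*`. -/
noncomputable def dual (M : KRep k r) : KRep k r where
  V1 := Module.Dual k M.V2
  V2 := Module.Dual k M.V1
  map i := (M.map i).dualMap

/-- The action of an `r × r`-matrix `A` on a representation, corresponding to the pullback
along the algebra homomorphism `φ_A` with `φ_A(γ_j) = Σ_i a_{ij} γ_i`. -/
def glAct (M : KRep k r) (A : Matrix (Fin r) (Fin r) k) : KRep k r where
  V1 := M.V1
  V2 := M.V2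
  map j := ∑ i, A i j • M.map i

/-- `M` is `GL_r(k)`-stable: `A.M ≅ M` for every `A ∈ GL_r(k)`, where `A.M` is the pullback
of `M` along `φ_{A⁻¹}`. -/
def GLStable (M : KRep k r) : Prop :=
  ∀ A : GL (Fin r) k,
    Nonempty (Iso (M.glAct ((A⁻¹ : GL (Fin r) k) : Matrix (Fin r) (Fin r) k)) M)

end KRep

/-! ## Abstract Auslander–Reiten data for `rep(Γ_r)` -/

/-- Abstract Auslander–Reiten-theoretic data for the generalized Kronecker algebra
`K_r = kΓ_r`: the AR translate `τ` (a bijection on regular indecomposables, here recorded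
as a permutation of all representations), the classes of preprojective and preinjective
representations, the relation of lying in the same AR component, and quasi-simplicity. -/
structure KroneckerAR (k : Type) [Field k] (r : ℕ) where
  /-- The Auslander–Reiten translate `τ`. -/
  tau : Equiv.Perm (KRep k r)
  /-- `M` lies in the preprojective component `𝒫`. -/
  Preproj : KRep k r → Prop
  /-- `M` lies in one of the preinjective component `ℐ`. -/
  Preinj : KRep k r → Prop
  /-- `M`, `N` lie in the same component of the AR quiver. -/
  sameComp : KRep k r → KRep k r → Prop
  sameComp_equiv : Equivalence sameComp
  sameComp_tau : ∀ M, sameComp M (tau M)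
  /-- `M` is quasi-simple (lies in the bottom layer of a `ℤA∞` component). -/
  quasiSimple : KRep k r → Prop

namespace KroneckerAR

variable {k : Type} [Field k] {r : ℕ}

/-- `M` is regular: neither preprojective nor preinjective. -/
def Regular (S : KroneckerAR k r) (M : KRep k r) : Prop := ¬ S.Preproj M ∧ ¬ S.Preinj M

/-- The regular component containing `X` has width `W(𝒞) = w`: there are quasi-simple
representations `M_𝒞` and `W_𝒞` in the component of `X` such that the `τ⁻¹`-orbit of `M_𝒞`
consists of `EKP`-representations, `τ M_𝒞 ∉ EKP` (so the cone `(M_𝒞 →)` is `EKP ∩ 𝒞`),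
dually the `τ`-orbit of `W_𝒞` consists of `EIP`-representations with `τ⁻¹ W_𝒞 ∉ EIP`
(so `(→ W_𝒞) = EIP ∩ 𝒞`), and `τ^{w+1} M_𝒞 = W_𝒞`. -/
def IsWidth (S : KroneckerAR k r) (X : KRep k r) (w : ℕ) : Prop :=
  ∃ MC WC : KRep k r, S.quasiSimple MC ∧ S.quasiSimple WC ∧
    S.sameComp X MC ∧ S.sameComp X WC ∧
    (∀ j : ℕ, ((S.tau⁻¹ ^ j) MC).EKP) ∧ ¬ (S.tau MC).EKP ∧
    (∀ j : ℕ, ((S.tau ^ j) WC).EIP) ∧ ¬ (S.tau⁻¹ WC).EIP ∧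
    (S.tau ^ (w + 1)) MC = WC

end KroneckerAR
/-! ## The universal covering quiver `C_r` -/

/-- The combinatorial data of a quiver whose underlying graph is `r`-regular and which has
bipartite orientation: a set `Src` of sources, a set `Snk` of sinks, and for each source
(resp. sink) exactly one incident arrow with label (`π`-image) `γ_i` for every `i`;
`step x i` is the target of the arrow labelled `i` starting at `x`, and `back y i` is the
source of the arrow labelled `i` ending at `y`. -/
structure BipData (r : ℕ) where
  Src : Type
  Snk : Type
  step : Src → Fin r → Snk
  back : Snk → Fin r → Src
  step_back : ∀ y i, step (back y i) i = y
  back_step : ∀ x i, back (step x i) i = x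
  step_inj : ∀ x, Function.Injective (step x)
  back_inj : ∀ y, Function.Injective (back y)

/-- The underlying (simple) graph of the quiver. -/
def BipData.graph {r : ℕ} (Q : BipData r) : SimpleGraph (Q.Src ⊕ Q.Snk) where
  Adj a b := (∃ x i, a = Sum.inl x ∧ b = Sum.inr (Q.step x i)) ∨
             (∃ x i, b = Sum.inl x ∧ a = Sum.inr (Q.step x i))
  symm := ⟨by
    rintro a b (⟨x, i, h1, h2⟩ | ⟨x, i, h1, h2⟩)
    · exact Or.inr ⟨x, i, h1, h2⟩
    · exact Or.inl ⟨x, i, h1, h2⟩⟩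
  loopless := ⟨by
    rintro a (⟨x, i, h1, h2⟩ | ⟨x, i, h1, h2⟩) <;> (subst h1; simp at h2)⟩

/-- The universal covering quiver `C_r` of `Γ_r`: an `r`-regular tree with bipartite
orientation. -/
structure CrQuiver (r : ℕ) extends BipData r where
  isTree : toBipData.graph.IsTree

/-! ## Representations of `C_r` -/

/-- A finite-dimensional representation of `C_r` over `k` (finitely supported). -/
structure CrRep (k : Type) [Field k] {r : ℕ} (Q : CrQuiver r) where
  Vs : Q.Src → Type
  Vt : Q.Snk → Type
  [acs : ∀ x, AddCommGroup (Vs x)]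
  [mds : ∀ x, Module k (Vs x)]
  [act : ∀ y, AddCommGroup (Vt y)]
  [mdt : ∀ y, Module k (Vt y)]
  [fds : ∀ x, FiniteDimensional k (Vs x)]
  [fdt : ∀ y, FiniteDimensional k (Vt y)]
  map : ∀ (x : Q.Src) (i : Fin r), Vs x →ₗ[k] Vt (Q.step x i)
  finSupp : {z : Q.Src ⊕ Q.Snk |
      Sum.elim (fun x => ∃ v : Vs x, v ≠ 0) (fun y => ∃ v : Vt y, v ≠ 0) z}.Finite

attribute [instance] CrRep.acs CrRep.mds CrRep.act CrRep.mdt CrRep.fds CrRep.fdt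

namespace CrRep

variable {k : Type} [Field k] {r : ℕ} {Q : CrQuiver r}

/-- The support of `M`. -/
def suppSet (M : CrRep k Q) : Set (Q.Src ⊕ Q.Snk) :=
  {z | Sum.elim (fun x => ∃ v : M.Vs x, v ≠ 0) (fun y => ∃ v : M.Vt y, v ≠ 0) z}

/-- `z` belongs to `T(M)`, the minimal subtree of `C_r` containing the support of `M`:
it lies on a path between two support vertices. -/
def inTree (M : CrRep k Q) (z : Q.Src ⊕ Q.Snk) : Prop :=
  ∃ a ∈ M.suppSet, ∃ b ∈ M.suppSet, ∃ p : Q.toBipData.graph.Walk a b,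
    p.IsPath ∧ z ∈ p.support

/-- `z` is a leaf of `M`: a vertex of `T(M)` with at most one neighbour in `T(M)`. -/
def IsLeaf (M : CrRep k Q) (z : Q.Src ⊕ Q.Snk) : Prop :=
  M.inTree z ∧ {w | Q.toBipData.graph.Adj z w ∧ M.inTree w}.Subsingleton

/-- The dimension of `M` at a vertex. -/
noncomputable def dimAt (M : CrRep k Q) (z : Q.Src ⊕ Q.Snk) : ℕ :=
  Sum.elim (fun x => Module.finrank k (M.Vs x)) (fun y => Module.finrank k (M.Vt y)) z

/-- All structure maps of `M` are injective (the class `Inj`). -/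
def AllInj (M : CrRep k Q) : Prop := ∀ x i, Function.Injective ⇑(M.map x i)

/-- All structure maps of `M` are surjective (the class `Sur`). -/
def AllSur (M : CrRep k Q) : Prop := ∀ x i, Function.Surjective ⇑(M.map x i)

end CrRep

/-- Morphisms of representations of `C_r`. -/
structure CrHom {k : Type} [Field k] {r : ℕ} {Q : CrQuiver r} (M N : CrRep k Q) where
  fs : ∀ x, M.Vs x →ₗ[k] N.Vs x
  ft : ∀ y, M.Vt y →ₗ[k] N.Vt y
  comm : ∀ x i, (ft (Q.step x i)).comp (M.map x i) = (N.map x i).comp (fs x)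

/-- A morphism is zero if all its components vanish. -/
def CrHom.IsZero {k : Type} [Field k] {r : ℕ} {Q : CrQuiver r} {M N : CrRep k Q}
    (f : CrHom M N) : Prop :=
  (∀ x, f.fs x = 0) ∧ (∀ y, f.ft y = 0)

/-- Isomorphisms of representations of `C_r`. -/
structure CrIso {k : Type} [Field k] {r : ℕ} {Q : CrQuiver r} (M N : CrRep k Q) where
  es : ∀ x, M.Vs x ≃ₗ[k] N.Vs x
  et : ∀ y, M.Vt y ≃ₗ[k] N.Vt y
  comm : ∀ x i, ((et (Q.step x i) : M.Vt (Q.step x i) →ₗ[k] N.Vt (Q.step x i))).comp (M.map x i)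
      = (N.map x i).comp (es x : M.Vs x →ₗ[k] N.Vs x)

namespace CrRep

variable {k : Type} [Field k] {r : ℕ} {Q : CrQuiver r}

/-- `M` is indecomposable: it is nonzero and its endomorphism ring has no nontrivial
idempotents. -/
def Indec (M : CrRep k Q) : Prop :=
  M.suppSet.Nonempty ∧
  ∀ f : CrHom M M, (∀ x, (f.fs x).comp (f.fs x) = f.fs x) →
    (∀ y, (f.ft y).comp (f.ft y) = f.ft y) →
    f.IsZero ∨ ((∀ x, f.fs x = LinearMap.id) ∧ (∀ y, f.ft y = LinearMap.id))

/-- `M` is balanced: indecomposable with a leaf in `C_r^+` (sources) and a leaf in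
`C_r^-` (sinks). -/
def Balanced (M : CrRep k Q) : Prop :=
  M.Indec ∧ (∃ x : Q.Src, M.IsLeaf (Sum.inl x)) ∧ (∃ y : Q.Snk, M.IsLeaf (Sum.inr y))

end CrRep
/-! ## The push-down functor `π_λ : rep(C_r) → rep(Γ_r)` -/

theorem finiteDimensional_directSum {k : Type} [Field k] {ι : Type} (V : ι → Type)
    [∀ i, AddCommGroup (V i)] [∀ i, Module k (V i)] [∀ i, FiniteDimensional k (V i)]
    (h : {i : ι | ∃ v : V i, v ≠ 0}.Finite) : FiniteDimensional k (⨁ i, V i) := by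
  classical
  set s : Finset ι := h.toFinset with hs
  let g : (⨁ i : {j // j ∈ s}, V i.1) →ₗ[k] ⨁ i, V i :=
    DirectSum.toModule k {j // j ∈ s} (⨁ i, V i) fun i => DirectSum.lof k ι V i.1
  have hfd : FiniteDimensional k (⨁ i : {j // j ∈ s}, V i.1) := by
    have e := DirectSum.linearEquivFunOnFintype k {j // j ∈ s} (fun i : {j // j ∈ s} => V i.1)
    exact Module.Finite.equiv e.symm
  have hsurj : Function.Surjective g := by
    intro m
    induction m using DirectSum.induction_on with
    | zero => exact ⟨0, map_zero g⟩
    | of i x =>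
      by_cases hi : i ∈ s
      · refine ⟨DirectSum.lof k {j // j ∈ s} (fun j : {j // j ∈ s} => V j.1) ⟨i, hi⟩ x, ?_⟩
        simp only [g, DirectSum.toModule_lof]
        rw [DirectSum.lof_eq_of]
      · have hx : x = 0 := by
          by_contra hx
          exact hi (by simpa [hs] using ⟨x, hx⟩)
        exact ⟨0, by simp [hx]⟩
    | add a b ha hb =>
      obtain ⟨a', ha'⟩ := ha
      obtain ⟨b', hb'⟩ := hb
      exact ⟨a' + b', by simp [ha', hb']⟩
  exact Module.Finite.of_surjective g hsurj

namespace CrRep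

variable {k : Type} [Field k] {r : ℕ} {Q : CrQuiver r}

/-- The structure map `π_λ(M)(γ_i) = ⊕_{π(β) = γ_i} M(β)` of the push-down. -/
noncomputable def pushMap (M : CrRep k Q) (i : Fin r) :
    (⨁ x, M.Vs x) →ₗ[k] (⨁ y, M.Vt y) := by
  classical
  exact DirectSum.toModule k Q.Src (⨁ y, M.Vt y) fun x =>
    (DirectSum.lof k Q.Snk (fun y => M.Vt y) (Q.step x i)).comp (M.map x i)

/-- The push-down `π_λ(M)` of a representation of `C_r` along the Galois covering
`π : C_r → Γ_r`. -/
noncomputable def pushdown (M : CrRep k Q) : KRep k r where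
  V1 := ⨁ x, M.Vs x
  V2 := ⨁ y, M.Vt y
  f1 := finiteDimensional_directSum (fun x => M.Vs x)
    (M.finSupp.preimage (Set.injOn_of_injective Sum.inl_injective))
  f2 := finiteDimensional_directSum (fun y => M.Vt y)
    (M.finSupp.preimage (Set.injOn_of_injective Sum.inr_injective))
  map := M.pushMap

end CrRep
/-! ## Automorphisms of `C_r` and the actions of `G = π(Γ_r)` and of `S_r` -/

/-- A quiver automorphism of `C_r` lying over the permutation `σ` of the arrow labels
`γ_1, …, γ_r` of `Γ_r`.  For `σ = 1` these are exactly the deck transformations, i.e.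
the elements of the Galois group `G = π(Γ_r)`. -/
structure CrPermAut {r : ℕ} (Q : CrQuiver r) (σ : Equiv.Perm (Fin r)) where
  es : Q.Src ≃ Q.Src
  et : Q.Snk ≃ Q.Snk
  comm : ∀ x i, Q.step (es x) (σ i) = et (Q.step x i)

/-- An element of the Galois group `G = π(Γ_r)`, acting on `C_r` as a label-preserving
quiver automorphism. -/
abbrev CrAut {r : ℕ} (Q : CrQuiver r) := CrPermAut Q (1 : Equiv.Perm (Fin r))

/-- The induced permutation of the vertex set. -/
def CrPermAut.onV {r : ℕ} {Q : CrQuiver r} {σ : Equiv.Perm (Fin r)} (φ : CrPermAut Q σ) :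
    (Q.Src ⊕ Q.Snk) ≃ (Q.Src ⊕ Q.Snk) :=
  Equiv.sumCongr φ.es φ.et

namespace CrRep

variable {k : Type} [Field k] {r : ℕ} {Q : CrQuiver r}

/-- The twist `σ(M)^g` of a representation by an automorphism `φ` of `C_r` lying over
`σ`:  `(M^φ)_x = M_{φ(x)}` and `(M^φ)(α) = M(φ(α))`.  For `σ = 1` this is the shift
`M ↦ M^g` by an element `g` of the Galois group `G`. -/
noncomputable def twist (M : CrRep k Q) {σ : Equiv.Perm (Fin r)} (φ : CrPermAut Q σ) :
    CrRep k Q where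
  Vs x := M.Vs (φ.es x)
  Vt y := M.Vt (φ.et y)
  acs := fun x => inferInstance
  mds := fun x => inferInstance
  act := fun y => inferInstance
  mdt := fun y => inferInstance
  fds := fun x => inferInstance
  fdt := fun y => inferInstance
  map x i := by
    show M.Vs (φ.es x) →ₗ[k] M.Vt (φ.et (Q.step x i))
    rw [← φ.comm x i]
    exact M.map (φ.es x) (σ i)
  finSupp := by
    have h := M.finSupp.preimage (Set.injOn_of_injective φ.onV.injective)
    convert h using 1
    ext z
    cases z <;> rfl

/-- The shift `M ↦ M^g` of a representation by an element of the Galois group. -/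
noncomputable def shift (M : CrRep k Q) (g : CrAut Q) : CrRep k Q := M.twist g

end CrRep
/-! ## Leaf-connected pairs and the extension `N ∗_f M` -/

/-- `(N, M)` is leaf-connected with connecting arrow `α : x0 → Q.step x0 i0`:
`x0` is a leaf of `M`, the target of `α` is a leaf of `N` and the supports are disjoint. -/
def LeafConnected {k : Type} [Field k] {r : ℕ} {Q : CrQuiver r} (N M : CrRep k Q)
    (x0 : Q.Src) (i0 : Fin r) : Prop :=
  M.IsLeaf (Sum.inl x0) ∧ N.IsLeaf (Sum.inr (Q.step x0 i0)) ∧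
  M.suppSet ∩ N.suppSet = ∅

namespace CrRep

variable {k : Type} [Field k] {r : ℕ} {Q : CrQuiver r}

/-- The auxiliary "correction" map used to define `N ∗_f M`: it equals
`(m, n) ↦ (0, f m)` along the connecting arrow and `0` along every other arrow. -/
noncomputable def starCorr (N M : CrRep k Q) (x0 : Q.Src) (i0 : Fin r)
    (f : M.Vs x0 →ₗ[k] N.Vt (Q.step x0 i0)) (x : Q.Src) (i : Fin r) :
    (M.Vs x × N.Vs x) →ₗ[k] (M.Vt (Q.step x i) × N.Vt (Q.step x i)) := by
  classical
  by_cases h : x = x0 ∧ i = i0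
  · obtain ⟨h1, h2⟩ := h
    subst h1; subst h2
    exact (LinearMap.inr k (M.Vt (Q.step x i)) (N.Vt (Q.step x i))).comp
      (f.comp (LinearMap.fst k (M.Vs x) (N.Vs x)))
  · exact 0

/-- The extension `N ∗_f M` of `M` by `N` along a connecting map `f`:
it restricts to `M` on `supp M`, to `N` on `supp N`, and has the map `f` along the
connecting arrow. -/
noncomputable def star (N M : CrRep k Q) (x0 : Q.Src) (i0 : Fin r)
    (f : M.Vs x0 →ₗ[k] N.Vt (Q.step x0 i0)) : CrRep k Q where
  Vs x := M.Vs x × N.Vs x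
  Vt y := M.Vt y × N.Vt y
  acs := fun x => inferInstance
  mds := fun x => inferInstance
  act := fun y => inferInstance
  mdt := fun y => inferInstance
  fds := fun x => inferInstance
  fdt := fun y => inferInstance
  map x i := (M.map x i).prodMap (N.map x i) + starCorr N M x0 i0 f x i
  finSupp := by
    refine (M.finSupp.union N.finSupp).subset ?_
    rintro (x | y) hz
    · obtain ⟨v, hv⟩ := hz
      by_cases h1 : v.1 = 0
      · have h2 : v.2 ≠ 0 := fun h2 => hv (Prod.ext h1 h2)
        exact Or.inr ⟨v.2, h2⟩
      · exact Or.inl ⟨v.1, h1⟩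
    · obtain ⟨v, hv⟩ := hz
      by_cases h1 : v.1 = 0
      · have h2 : v.2 ≠ 0 := fun h2 => hv (Prod.ext h1 h2)
        exact Or.inr ⟨v.2, h2⟩
      · exact Or.inl ⟨v.1, h1⟩

end CrRep

/-! ## Small trees, and the representations `X^i` -/

namespace CrRep

variable {k : Type} [Field k] {r : ℕ} {Q : CrQuiver r}

/-- The tree `T(L)` of `L` is small: it has leaves among the sources and among the sinks,
every vertex has at most `3` neighbours in the tree, and two distinct vertices with
exactly `3` neighbours in the tree have distance at least `3`. -/
def SmallTree (L : CrRep k Q) : Prop :=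
  (∃ x : Q.Src, L.IsLeaf (Sum.inl x)) ∧ (∃ y : Q.Snk, L.IsLeaf (Sum.inr y)) ∧
  (∀ z, L.inTree z → {w | Q.toBipData.graph.Adj z w ∧ L.inTree w}.ncard ≤ 3) ∧
  (∀ z w, L.inTree z → L.inTree w →
    {u | Q.toBipData.graph.Adj z u ∧ L.inTree u}.ncard = 3 →
    {u | Q.toBipData.graph.Adj w u ∧ L.inTree u}.ncard = 3 →
    z = w ∨ 3 ≤ Q.toBipData.graph.dist z w)

/-- `X` is (isomorphic to) the representation `X^i` based at the source `x0`: it is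
indecomposable, one-dimensional at `x0` and at the vertices `t(β_j)`, `j ≠ i`,
zero elsewhere, with isomorphisms along all arrows `β_j`, `j ≠ i`. -/
def IsXi (x0 : Q.Src) (i : Fin r) (X : CrRep k Q) : Prop :=
  X.Indec ∧
  (∀ x : Q.Src, (∃ v : X.Vs x, v ≠ 0) ↔ x = x0) ∧
  (∀ y : Q.Snk, (∃ v : X.Vt y, v ≠ 0) ↔ ∃ j : Fin r, j ≠ i ∧ y = Q.step x0 j) ∧
  Module.finrank k (X.Vs x0) = 1 ∧
  (∀ j : Fin r, j ≠ i → Function.Bijective ⇑(X.map x0 j))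

/-- `M` is `S_r`-stable with respect to the choice `Φ` of automorphisms of `C_r` lying
over the permutations `σ ∈ S_r` of the arrows of `Γ_r`: `M ≅ σ(M)^{g_σ}` for all `σ`. -/
def SrStable (M : CrRep k Q) (Φ : ∀ σ : Equiv.Perm (Fin r), CrPermAut Q σ) : Prop :=
  ∀ σ : Equiv.Perm (Fin r), Nonempty (CrIso M (M.twist (Φ σ)))

end CrRep

/-! ## Abstract Auslander–Reiten data for `rep(C_r)` and `rep(Γ_r)` -/

/-- Abstract Auslander–Reiten-theoretic data for the representations of the universal
covering quiver `C_r` and of `Γ_r`: the AR translates, AR components, quasi-simplicity,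
quasi-length, the preprojective/preinjective classes downstairs, cones in a component,
almost split sequences and injectivity of representations of `C_r`. -/
structure CoverAR (k : Type) [Field k] {r : ℕ} (Q : CrQuiver r) where
  /-- The AR translate `τ_{C_r}` of `rep(C_r)`. -/
  tauC : Equiv.Perm (CrRep k Q)
  /-- The AR translate `τ` of `rep(Γ_r)`. -/
  tauK : Equiv.Perm (KRep k r)
  /-- Same AR component in `rep(C_r)`. -/
  sameC : CrRep k Q → CrRep k Q → Prop
  sameC_equiv : Equivalence sameC
  sameC_tau : ∀ M, sameC M (tauC M)
  /-- Same AR component in `rep(Γ_r)`. -/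
  sameK : KRep k r → KRep k r → Prop
  sameK_equiv : Equivalence sameK
  sameK_tau : ∀ M, sameK M (tauK M)
  /-- Quasi-simple in `rep(C_r)`. -/
  qsC : CrRep k Q → Prop
  /-- Quasi-simple in `rep(Γ_r)`. -/
  qsK : KRep k r → Prop
  /-- Quasi-length in `rep(C_r)`. -/
  qlC : CrRep k Q → ℕ
  /-- Preprojective representations of `Γ_r` (the component `𝒫`). -/
  Preproj : KRep k r → Prop
  /-- Preinjective representations of `Γ_r` (the component `ℐ`). -/
  Preinj : KRep k r → Prop
  /-- The cone `(X →)` of successors of `X` in its AR component. -/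
  succConeC : CrRep k Q → Set (CrRep k Q)
  /-- The cone `(→ X)` of predecessors of `X` in its AR component. -/
  predConeC : CrRep k Q → Set (CrRep k Q)
  /-- `ARSeqTriple A B C` : there is an almost split sequence `0 → A → B → C → 0`. -/
  ARSeqTriple : CrRep k Q → CrRep k Q → CrRep k Q → Prop
  /-- `M` is an injective representation of `C_r`. -/
  InjRep : CrRep k Q → Prop

namespace CoverAR

variable {k : Type} [Field k] {r : ℕ} {Q : CrQuiver r}

/-- `M ∈ rep(C_r)` is regular: its push-down `π_λ(M)` is neither preprojective nor
preinjective. -/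
def RegularC (A : CoverAR k Q) (M : CrRep k Q) : Prop :=
  ¬ A.Preproj M.pushdown ∧ ¬ A.Preinj M.pushdown

/-- `N ∈ rep(Γ_r)` is regular. -/
def RegularK (A : CoverAR k Q) (N : KRep k r) : Prop :=
  ¬ A.Preproj N ∧ ¬ A.Preinj N

/-- The regular component `𝒟` of `rep(C_r)` containing `X` has width `W_C(𝒟) = w`:
there are quasi-simple `I_𝒟`, `S_𝒟` in the component of `X` with
`(I_𝒟 →) = Inj ∩ 𝒟` (equivalently: the whole `τ⁻¹`-orbit of `I_𝒟` lies in `Inj`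
while `τ I_𝒟 ∉ Inj`), dually `(→ S_𝒟) = Sur ∩ 𝒟`, and `τ^{w+1} I_𝒟 = S_𝒟`. -/
def IsWidth (A : CoverAR k Q) (X : CrRep k Q) (w : ℕ) : Prop :=
  ∃ I S : CrRep k Q, A.qsC I ∧ A.qsC S ∧ A.sameC X I ∧ A.sameC X S ∧
    (∀ j : ℕ, ((A.tauC⁻¹ ^ j) I).AllInj) ∧ ¬ (A.tauC I).AllInj ∧
    (∀ j : ℕ, ((A.tauC ^ j) S).AllSur) ∧ ¬ (A.tauC⁻¹ S).AllSur ∧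
    (A.tauC ^ (w + 1)) I = S

/-- The regular component of `X ∈ rep(Γ_r)` has width `W(𝒞) = w`
(formulated as in `KroneckerAR.IsWidth`). -/
def IsWidthK (A : CoverAR k Q) (X : KRep k r) (w : ℕ) : Prop :=
  ∃ MC WC : KRep k r, A.qsK MC ∧ A.qsK WC ∧
    A.sameK X MC ∧ A.sameK X WC ∧
    (∀ j : ℕ, ((A.tauK⁻¹ ^ j) MC).EKP) ∧ ¬ (A.tauK MC).EKP ∧
    (∀ j : ℕ, ((A.tauK ^ j) WC).EIP) ∧ ¬ (A.tauK⁻¹ WC).EIP ∧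
    (A.tauK ^ (w + 1)) MC = WC

end CoverAR

/-! ## Statement 8 -/


namespace Stmt8

open Sum SimpleGraph

variable {r : ℕ} {Q : CrQuiver r}

abbrev VQ (Q : CrQuiver r) := Q.Src ⊕ Q.Snk

abbrev Gr (Q : CrQuiver r) : SimpleGraph (VQ Q) := Q.toBipData.graph

/-! ### Basic adjacency lemmas -/

lemma adj_step (u : Q.Src) (i : Fin r) :
    (Gr Q).Adj (inl u) (inr (Q.step u i)) := Or.inl ⟨u, i, rfl, rfl⟩

lemma adj_back (t : Q.Snk) (j : Fin r) :
    (Gr Q).Adj (inr t) (inl (Q.back t j)) :=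
  Or.inr ⟨Q.back t j, j, rfl, by rw [Q.step_back]⟩

lemma adj_src_snk {u : Q.Src} {t : Q.Snk}
    (h : (Gr Q).Adj (inl u) (inr t)) : ∃ i, Q.step u i = t := by
  rcases h with ⟨a, i, h1, h2⟩ | ⟨a, i, h1, h2⟩
  · refine ⟨i, ?_⟩
    obtain rfl : u = a := by injection h1
    injection h2 with h2
    exact h2.symm
  · simp at h1

lemma adj_snk_src {t : Q.Snk} {u : Q.Src}
    (h : (Gr Q).Adj (inr t) (inl u)) : ∃ i, Q.step u i = t :=
  adj_src_snk h.symm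

lemma no_adj_ll {u u' : Q.Src} (h : (Gr Q).Adj (inl u) (inl u')) : False := by
  rcases h with ⟨a, i, h1, h2⟩ | ⟨a, i, h1, h2⟩ <;> simp at h2

lemma no_adj_rr {t t' : Q.Snk} (h : (Gr Q).Adj (inr t) (inr t')) : False := by
  rcases h with ⟨a, i, h1, h2⟩ | ⟨a, i, h1, h2⟩ <;> simp at h1

lemma adj_inr_cases {t : Q.Snk} {w : VQ Q} (h : (Gr Q).Adj (inr t) w) :
    ∃ j, w = inl (Q.back t j) := by
  cases w with
  | inl u =>
    obtain ⟨i, hi⟩ := adj_snk_src h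
    exact ⟨i, by rw [← hi, Q.back_step]⟩
  | inr t' => exact absurd h no_adj_rr

/-! ### Labels and the `nxt` function -/

noncomputable def lab {u : Q.Src} {t : Q.Snk} (h : ∃ i, Q.step u i = t) : Fin r :=
  h.choose

lemma lab_spec {u : Q.Src} {t : Q.Snk} (h : ∃ i, Q.step u i = t) :
    Q.step u (lab h) = t := h.choose_spec

lemma lab_step {u : Q.Src} {i : Fin r} (h : ∃ j, Q.step u j = Q.step u i) :
    lab h = i := Q.step_inj u (lab_spec h)

noncomputable def nxt : ∀ (z w : VQ Q), (Gr Q).Adj z w → VQ Q → VQ Q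
  | inl _, inr _, h, inl u' => inr (Q.step u' (lab (adj_src_snk h)))
  | inl _, inr _, _, inr t' => inr t'
  | inr _, inl _, h, inr t' => inl (Q.back t' (lab (adj_snk_src h)))
  | inr _, inl _, _, inl u' => inl u'
  | inl _, inl _, _, s => s
  | inr _, inr _, _, s => s

@[simp] lemma nxt_lr {u : Q.Src} {t : Q.Snk} (h : (Gr Q).Adj (inl u) (inr t)) (u' : Q.Src) :
    nxt (inl u) (inr t) h (inl u') = inr (Q.step u' (lab (adj_src_snk h))) := rfl

@[simp] lemma nxt_rl {t : Q.Snk} {u : Q.Src} (h : (Gr Q).Adj (inr t) (inl u)) (t' : Q.Snk) :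
    nxt (inr t) (inl u) h (inr t') = inl (Q.back t' (lab (adj_snk_src h))) := rfl

lemma nxt_isLeft {z w : VQ Q} (h : (Gr Q).Adj z w) (s : VQ Q)
    (hs : s.isLeft = z.isLeft) : (nxt z w h s).isLeft = w.isLeft := by
  cases z with
  | inl u =>
    cases w with
    | inl u' => exact absurd h no_adj_ll
    | inr t => cases s with
      | inl u' => rfl
      | inr t' => simp at hs
  | inr t =>
    cases w with
    | inl u => cases s with
      | inl u' => simp at hs
      | inr t' => rfl
    | inr t' => exact absurd h no_adj_rr

lemma nxt_cancel {z w : VQ Q} (h : (Gr Q).Adj z w) (s : VQ Q)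
    (hs : s.isLeft = z.isLeft) :
    nxt w z h.symm (nxt z w h s) = s := by
  cases z with
  | inl u =>
    cases w with
    | inl u' => exact absurd h no_adj_ll
    | inr t => cases s with
      | inl u' =>
        show inl (Q.back (Q.step u' (lab (adj_src_snk h))) (lab (adj_snk_src h.symm))) = _
        have : lab (adj_snk_src h.symm) = lab (adj_src_snk h) := rfl
        rw [this, Q.back_step]
      | inr t' => simp at hs
  | inr t =>
    cases w with
    | inl u => cases s with
      | inl u' => simp at hs
      | inr t' =>
        show inr (Q.step (Q.back t' (lab (adj_snk_src h))) (lab (adj_src_snk h.symm))) = _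
        have : lab (adj_src_snk h.symm) = lab (adj_snk_src h) := rfl
        rw [this, Q.step_back]
    | inr t' => exact absurd h no_adj_rr

lemma nxt_adj {z w : VQ Q} (h : (Gr Q).Adj z w) (s : VQ Q)
    (hs : s.isLeft = z.isLeft) : (Gr Q).Adj s (nxt z w h s) := by
  cases z with
  | inl u =>
    cases w with
    | inl u' => exact absurd h no_adj_ll
    | inr t => cases s with
      | inl u' => exact adj_step _ _
      | inr t' => simp at hs
  | inr t =>
    cases w with
    | inl u => cases s with
      | inl u' => simp at hs
      | inr t' => exact adj_back _ _
    | inr t' => exact absurd h no_adj_rr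

lemma nxt_coh {z w : VQ Q} (h : (Gr Q).Adj z w) (s : VQ Q)
    (hs : s.isLeft = z.isLeft) (h2 : (Gr Q).Adj s (nxt z w h s)) :
    nxt s (nxt z w h s) h2 z = w := by
  cases z with
  | inl u =>
    cases w with
    | inl u' => exact absurd h no_adj_ll
    | inr t => cases s with
      | inl u' =>
        show inr (Q.step u (lab (adj_src_snk h2))) = inr t
        have h3 : lab (adj_src_snk h2) = lab (adj_src_snk h) := by
          have := lab_spec (adj_src_snk h2)
          exact Q.step_inj u' this
        rw [h3, lab_spec (adj_src_snk h)]
      | inr t' => simp at hs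
  | inr t =>
    cases w with
    | inl u => cases s with
      | inl u' => simp at hs
      | inr t' =>
        show inl (Q.back t (lab (adj_snk_src h2))) = inl u
        have h3 : lab (adj_snk_src h2) = lab (adj_snk_src h) := by
          have h4 := lab_spec (adj_snk_src h2)
          have h5 : Q.step (Q.back t' (lab (adj_snk_src h))) (lab (adj_snk_src h)) = t' :=
            Q.step_back _ _
          exact Q.step_inj _ (h4.trans h5.symm)
        rw [h3]
        have hspec := lab_spec (adj_snk_src h)
        have hb := Q.back_step u (lab (adj_snk_src h))
        rw [hspec] at hb
        rw [hb]
    | inr t' => exact absurd h no_adj_rr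

end Stmt8
namespace Stmt8

open Sum SimpleGraph

/-! ### General path lemmas -/

section Paths

variable {V' : Type} [DecidableEq V'] {G : SimpleGraph V'}

lemma append_isPath' {u v w : V'} {p : G.Walk u v} {q : G.Walk v w}
    (hp : p.IsPath) (hq : q.IsPath)
    (hint : ∀ z, z ∈ p.support → z ∈ q.support → z = v) : (p.append q).IsPath := by
  rw [Walk.isPath_def, Walk.support_append, List.nodup_append]
  refine ⟨hp.support_nodup, ?_, ?_⟩
  · have := hq.support_nodup
    rw [Walk.support_eq_cons] at this
    exact (List.nodup_cons.mp this).2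
  · intro z hz1 b hz2 hzb
    subst hzb
    have hz3 : z ∈ q.support := List.mem_of_mem_tail hz2
    have hzv : z = v := hint z hz1 hz3
    subst hzv
    have := hq.support_nodup
    rw [Walk.support_eq_cons] at this
    exact (List.nodup_cons.mp this).1 hz2

lemma exists_common {u v w : V'} {p : G.Walk u v} {q : G.Walk v w}
    (hp : p.IsPath) (hq : q.IsPath) (h : ¬ (p.append q).IsPath) :
    ∃ z, z ≠ v ∧ z ∈ p.support ∧ z ∈ q.support := by
  by_contra hcon
  push_neg at hcon
  refine h (append_isPath' hp hq fun z h1 h2 => ?_)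
  by_contra hne
  exact hcon z hne h1 h2

lemma split_eq {u v : V'} {p : G.Walk u v} (hp : p.IsPath) {w : V'}
    (hw : w ∈ p.support) :
    ∀ z, z ∈ (p.takeUntil w hw).support → z ∈ (p.dropUntil w hw).support → z = w := by
  intro z h1 h2
  have hnd := hp.support_nodup
  rw [← Walk.take_spec p hw, Walk.support_append, List.nodup_append] at hnd
  by_contra hne
  have h3 : z ∈ (p.dropUntil w hw).support.tail := by
    have h4 := Walk.support_eq_cons (p.dropUntil w hw)
    rw [h4] at h2
    rcases List.mem_cons.mp h2 with h5 | h5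
    · exact absurd h5 hne
    · exact h5
  exact hnd.2.2 z h1 z h3 rfl

lemma start_eq_of_mem_dropUntil {u v : V'} {p : G.Walk u v} (hp : p.IsPath)
    {w : V'} (hw : w ∈ p.support) (h : u ∈ (p.dropUntil w hw).support) : u = w :=
  split_eq hp hw u (Walk.start_mem_support _) h

end Paths

variable {r : ℕ} {Q : CrQuiver r}

noncomputable local instance : DecidableEq (VQ Q) := Classical.decEq _

/-! ### Following a walk with matching labels -/

noncomputable def fol : ∀ {z v : VQ Q}, (Gr Q).Walk z v → VQ Q → VQ Q
  | _, _, .nil, s => s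
  | _, _, .cons h p, s => fol p (nxt _ _ h s)

@[simp] lemma fol_nil {z : VQ Q} (s : VQ Q) :
    fol (Walk.nil : (Gr Q).Walk z z) s = s := rfl

@[simp] lemma fol_cons {z w v : VQ Q} (h : (Gr Q).Adj z w) (p : (Gr Q).Walk w v)
    (s : VQ Q) : fol (Walk.cons h p) s = fol p (nxt z w h s) := rfl

lemma fol_append {z v v' : VQ Q} (p : (Gr Q).Walk z v) (q : (Gr Q).Walk v v')
    (s : VQ Q) : fol (p.append q) s = fol q (fol p s) := by
  induction p generalizing s with
  | nil => rfl
  | cons h p ih => simp only [Walk.cons_append, fol_cons, ih]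

lemma fol_isLeft {z v : VQ Q} (p : (Gr Q).Walk z v) (s : VQ Q)
    (hs : s.isLeft = z.isLeft) : (fol p s).isLeft = v.isLeft := by
  induction p generalizing s with
  | nil => exact hs
  | cons h p ih => exact ih _ (nxt_isLeft h s hs)

/-! ### Canonical paths in the tree -/

noncomputable def pth (Q : CrQuiver r) (u v : VQ Q) : (Gr Q).Walk u v :=
  (Q.isTree.existsUnique_path u v).choose

lemma pth_isPath (u v : VQ Q) : (pth Q u v).IsPath :=
  (Q.isTree.existsUnique_path u v).choose_spec.1

lemma pth_unique {u v : VQ Q} {p : (Gr Q).Walk u v} (hp : p.IsPath) :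
    p = pth Q u v :=
  (Q.isTree.existsUnique_path u v).choose_spec.2 p hp

lemma pth_nil (u : VQ Q) : pth Q u u = Walk.nil :=
  (pth_unique Walk.IsPath.nil).symm

/-! ### The vertex map of the deck transformation -/

noncomputable def Fmap (Q : CrQuiver r) (a b : Q.Src) (v : VQ Q) : VQ Q :=
  fol (pth Q (inl a) v) (inl b)

lemma Fmap_isLeft (a b : Q.Src) (v : VQ Q) :
    (Fmap Q a b v).isLeft = v.isLeft :=
  fol_isLeft _ _ rfl

lemma Fmap_root (a b : Q.Src) : Fmap Q a b (inl a) = inl b := by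
  unfold Fmap
  rw [pth_nil]
  rfl

lemma Fmap_adj (a b : Q.Src) {v w : VQ Q} (h : (Gr Q).Adj v w) :
    Fmap Q a b w = nxt v w h (Fmap Q a b v) := by
  rcases Classical.em (w ∈ (pth Q (inl a) v).support) with hw | hw
  · -- the edge goes backwards along the canonical path
    have hdrop : (pth Q (inl a) v).dropUntil w hw = Walk.cons h.symm Walk.nil := by
      have h1 : ((pth Q (inl a) v).dropUntil w hw).IsPath :=
        (pth_isPath _ _).dropUntil hw
      have h2 : (Walk.cons h.symm Walk.nil : (Gr Q).Walk w v).IsPath :=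
        Walk.IsPath.nil.cons (by simp [h.symm.ne])
      exact (pth_unique h1).trans (pth_unique h2).symm
    have htake : pth Q (inl a) w = (pth Q (inl a) v).takeUntil w hw :=
      (pth_unique ((pth_isPath _ _).takeUntil hw)).symm
    have hFv : Fmap Q a b v = nxt w v h.symm (Fmap Q a b w) := by
      unfold Fmap
      conv_lhs => rw [← Walk.take_spec (pth Q (inl a) v) hw]
      rw [fol_append, hdrop, ← htake]
      rfl
    rw [hFv]
    exact (nxt_cancel h.symm (Fmap Q a b w) (Fmap_isLeft a b w)).symm
  · have hpath : ((pth Q (inl a) v).append (Walk.cons h Walk.nil)).IsPath := by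
      refine append_isPath' (pth_isPath _ _) (Walk.IsPath.nil.cons (by simp [h.ne])) ?_
      intro z hz1 hz2
      simp only [Walk.support_cons, Walk.support_nil, List.mem_cons,
        List.mem_singleton, List.not_mem_nil, or_false] at hz2
      rcases hz2 with rfl | rfl
      · rfl
      · exact absurd hz1 hw
    have heq : pth Q (inl a) w = (pth Q (inl a) v).append (Walk.cons h Walk.nil) :=
      (pth_unique hpath).symm
    unfold Fmap
    rw [heq, fol_append]
    rfl

lemma Fmap_inv_aux (a b : Q.Src) :
    ∀ (v v' : VQ Q), (Gr Q).Walk v v' → v' = inl a → Fmap Q b a (Fmap Q a b v) = v := by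
  intro v v' p
  induction p with
  | nil =>
    rintro rfl
    rw [Fmap_root, Fmap_root]
  | @cons u w _ h q ih =>
    intro hv'
    have ih := ih hv'
    have h1 : Fmap Q a b u = nxt w u h.symm (Fmap Q a b w) := Fmap_adj a b h.symm
    have hpar : (Fmap Q a b w).isLeft = w.isLeft := Fmap_isLeft a b w
    have h2 : (Gr Q).Adj (Fmap Q a b w) (nxt w u h.symm (Fmap Q a b w)) :=
      nxt_adj h.symm _ hpar
    rw [h1, Fmap_adj b a h2, ih]
    exact nxt_coh h.symm (Fmap Q a b w) hpar h2

lemma Fmap_inv (a b : Q.Src) (v : VQ Q) :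
    Fmap Q b a (Fmap Q a b v) = v :=
  Fmap_inv_aux a b v (inl a) (pth Q v (inl a)) rfl

end Stmt8
namespace Stmt8

open Sum SimpleGraph

variable {r : ℕ} {Q : CrQuiver r}

/-! ### Assembling the deck transformation -/

lemma elimS (v : VQ Q) (h : v.isLeft = true) (d : Q.Src) :
    inl (v.elim id fun _ => d) = v := by
  cases v with
  | inl u => rfl
  | inr t => simp at h

lemma elimT (v : VQ Q) (h : v.isLeft = false) (d : Q.Snk) :
    inr (v.elim (fun _ => d) id) = v := by
  cases v with
  | inl u => simp at h
  | inr t => rfl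

noncomputable def esFun (Q : CrQuiver r) (a b : Q.Src) (u : Q.Src) : Q.Src :=
  (Fmap Q a b (inl u)).elim id fun _ => u

noncomputable def etFun (Q : CrQuiver r) (a b : Q.Src) (t : Q.Snk) : Q.Snk :=
  (Fmap Q a b (inr t)).elim (fun _ => t) id

lemma inl_esFun (a b : Q.Src) (u : Q.Src) :
    inl (esFun Q a b u) = Fmap Q a b (inl u) :=
  elimS _ (by rw [Fmap_isLeft]; rfl) _

lemma inr_etFun (a b : Q.Src) (t : Q.Snk) :
    inr (etFun Q a b t) = Fmap Q a b (inr t) :=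
  elimT _ (by rw [Fmap_isLeft]; rfl) _

noncomputable def autOf (Q : CrQuiver r) (a b : Q.Src) : CrAut Q where
  es :=
    { toFun := esFun Q a b
      invFun := esFun Q b a
      left_inv := by
        intro u
        apply Sum.inl_injective (α := Q.Src) (β := Q.Snk)
        rw [inl_esFun, inl_esFun, Fmap_inv]
      right_inv := by
        intro u
        apply Sum.inl_injective (α := Q.Src) (β := Q.Snk)
        rw [inl_esFun, inl_esFun, Fmap_inv] }
  et :=
    { toFun := etFun Q a b
      invFun := etFun Q b a
      left_inv := by
        intro t
        apply Sum.inr_injective (α := Q.Src) (β := Q.Snk)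
        rw [inr_etFun, inr_etFun, Fmap_inv]
      right_inv := by
        intro t
        apply Sum.inr_injective (α := Q.Src) (β := Q.Snk)
        rw [inr_etFun, inr_etFun, Fmap_inv] }
  comm := by
    intro u i
    apply Sum.inr_injective (α := Q.Src) (β := Q.Snk)
    rw [Equiv.Perm.one_apply]
    show inr (Q.step (esFun Q a b u) i) = inr (etFun Q a b (Q.step u i))
    have hcalc : (inr (etFun Q a b (Q.step u i)) : VQ Q) =
        inr (Q.step (esFun Q a b u) i) := by
      calc (inr (etFun Q a b (Q.step u i)) : VQ Q) = Fmap Q a b (inr (Q.step u i)) :=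
            inr_etFun a b _
        _ = nxt (inl u) (inr (Q.step u i)) (adj_step u i) (Fmap Q a b (inl u)) :=
            Fmap_adj a b (adj_step u i)
        _ = nxt (inl u) (inr (Q.step u i)) (adj_step u i) (inl (esFun Q a b u)) := by
            rw [inl_esFun]
        _ = inr (Q.step (esFun Q a b u) (lab (adj_src_snk (adj_step u i)))) := rfl
        _ = inr (Q.step (esFun Q a b u) i) := by rw [lab_step]
    exact hcalc.symm

lemma autOf_es (a b : Q.Src) (u : Q.Src) :
    inl ((autOf Q a b).es u) = Fmap Q a b (inl u) :=
  inl_esFun a b u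

lemma autOf_root (a b : Q.Src) : (autOf Q a b).es a = b := by
  apply Sum.inl_injective (α := Q.Src) (β := Q.Snk)
  rw [autOf_es, Fmap_root]

/-! ### Automorphism gymnastics -/

def CrAutInv (g : CrAut Q) : CrAut Q where
  es := g.es.symm
  et := g.et.symm
  comm := by
    intro u i
    apply g.et.injective
    have h := g.comm (g.es.symm u) i
    rw [Equiv.Perm.one_apply] at h ⊢
    rw [Equiv.apply_symm_apply] at h
    rw [← h, Equiv.apply_symm_apply]

@[simp] lemma onV_inl (g : CrAut Q) (u : Q.Src) : g.onV (inl u) = inl (g.es u) := rfl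

@[simp] lemma onV_inr (g : CrAut Q) (t : Q.Snk) : g.onV (inr t) = inr (g.et t) := rfl

lemma onV_inv_left (g : CrAut Q) (v : VQ Q) : (CrAutInv g).onV (g.onV v) = v := by
  cases v <;> simp [CrAutInv]

lemma onV_inv_right (g : CrAut Q) (v : VQ Q) : g.onV ((CrAutInv g).onV v) = v := by
  cases v <;> simp [CrAutInv]

lemma comm' (g : CrAut Q) (u : Q.Src) (i : Fin r) :
    Q.step (g.es u) i = g.et (Q.step u i) := by
  have h := g.comm u i
  rwa [Equiv.Perm.one_apply] at h

lemma CrAut_adj (g : CrAut Q) {v w : VQ Q} (h : (Gr Q).Adj v w) :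
    (Gr Q).Adj (g.onV v) (g.onV w) := by
  rcases h with ⟨u, i, rfl, rfl⟩ | ⟨u, i, rfl, rfl⟩
  · rw [onV_inl, onV_inr, ← comm']
    exact adj_step _ _
  · rw [onV_inl, onV_inr, ← comm']
    exact (adj_step _ _).symm

def homOf (g : CrAut Q) : Gr Q →g Gr Q where
  toFun := fun v => g.onV v
  map_rel' := fun h => CrAut_adj g h

lemma homOf_inj (g : CrAut Q) : Function.Injective (homOf g) :=
  fun _ _ h => g.onV.injective h

/-! ### Transport of support, tree and leaves along deck transformations -/

variable {k : Type} [Field k]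

lemma suppSet_shift (N : CrRep k Q) (g : CrAut Q) :
    (N.shift g).suppSet = g.onV ⁻¹' N.suppSet := by
  ext z
  cases z with
  | inl u => exact Iff.rfl
  | inr t => exact Iff.rfl

lemma inTree_shift_to {N : CrRep k Q} {g : CrAut Q} {w : VQ Q}
    (h : (N.shift g).inTree w) : N.inTree (g.onV w) := by
  obtain ⟨a, ha, b, hb, p, hp, hm⟩ := h
  rw [suppSet_shift] at ha hb
  refine ⟨g.onV a, ha, g.onV b, hb, p.map (homOf g),
    Walk.map_isPath_of_injective (homOf_inj g) hp, ?_⟩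
  show g.onV w ∈ (p.map (homOf g)).support
  rw [Walk.support_map]
  exact List.mem_map_of_mem hm

lemma inTree_shift_of {N : CrRep k Q} {g : CrAut Q} {z : VQ Q}
    (h : N.inTree (g.onV z)) : (N.shift g).inTree z := by
  obtain ⟨a, ha, b, hb, p, hp, hm⟩ := h
  refine ⟨(CrAutInv g).onV a, ?_, (CrAutInv g).onV b, ?_, p.map (homOf (CrAutInv g)),
    Walk.map_isPath_of_injective (homOf_inj _) hp, ?_⟩
  · rw [suppSet_shift, Set.mem_preimage, onV_inv_right]; exact ha
  · rw [suppSet_shift, Set.mem_preimage, onV_inv_right]; exact hb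
  · show z ∈ (p.map (homOf (CrAutInv g))).support
    rw [Walk.support_map]
    have : z = (CrAutInv g).onV (g.onV z) := (onV_inv_left g z).symm
    rw [this]
    exact List.mem_map_of_mem hm

lemma IsLeaf_shift_of (N : CrRep k Q) (g : CrAut Q) {z : VQ Q}
    (h : N.IsLeaf (g.onV z)) : (N.shift g).IsLeaf z := by
  constructor
  · exact inTree_shift_of h.1
  · intro w1 hw1 w2 hw2
    apply g.onV.injective
    exact h.2 ⟨CrAut_adj g hw1.1, inTree_shift_to hw1.2⟩
      ⟨CrAut_adj g hw2.1, inTree_shift_to hw2.2⟩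

lemma suppSet_subset_inTree (R : CrRep k Q) {v : VQ Q} (h : v ∈ R.suppSet) :
    R.inTree v :=
  ⟨v, h, v, h, Walk.nil, Walk.IsPath.nil, by simp⟩

/-! ### Convexity of `inTree` -/

lemma inTree_of_path (R : CrRep k Q) {z v : VQ Q}
    (P : (Gr Q).Walk z v) (hP : P.IsPath) (hz : R.inTree z) (hv : v ∈ R.suppSet) :
    ∀ u ∈ P.support, R.inTree u := by
  classical
  obtain ⟨a, ha, b, hb, p, hp, hzp⟩ := hz
  rcases Classical.em ((P.reverse.append (p.dropUntil z hzp)).IsPath) with h1 | h1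
  · intro u hu
    refine ⟨v, hv, b, hb, _, h1, ?_⟩
    rw [Walk.mem_support_append_iff]
    left
    rwa [Walk.support_reverse, List.mem_reverse]
  · rcases Classical.em ((P.reverse.append (p.takeUntil z hzp).reverse).IsPath) with h2 | h2
    · intro u hu
      refine ⟨v, hv, a, ha, _, h2, ?_⟩
      rw [Walk.mem_support_append_iff]
      left
      rwa [Walk.support_reverse, List.mem_reverse]
    · exfalso
      obtain ⟨u1, hu1ne, hu1P, hu1p2⟩ :=
        exists_common hP.reverse ((hp.dropUntil hzp)) h1
      obtain ⟨u2, hu2ne, hu2P, hu2p1r⟩ :=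
        exists_common hP.reverse ((hp.takeUntil hzp).reverse) h2
      rw [Walk.support_reverse, List.mem_reverse] at hu1P hu2P
      rw [Walk.support_reverse, List.mem_reverse] at hu2p1r
      -- path A through z
      have hA : (((p.takeUntil z hzp).dropUntil u2 hu2p1r).append
          ((p.dropUntil z hzp).takeUntil u1 hu1p2)).IsPath := by
        apply append_isPath' ((hp.takeUntil hzp).dropUntil _) ((hp.dropUntil hzp).takeUntil _)
        intro zz hz1 hz2
        exact split_eq hp hzp zz
          (Walk.support_dropUntil_subset _ _ hz1)
          (Walk.support_takeUntil_subset _ _ hz2)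
      have hzA : z ∈ (((p.takeUntil z hzp).dropUntil u2 hu2p1r).append
          ((p.dropUntil z hzp).takeUntil u1 hu1p2)).support := by
        rw [Walk.mem_support_append_iff]
        left
        exact Walk.end_mem_support _
      -- path B avoiding z
      have hsplit : u1 ∈ (P.takeUntil u2 hu2P).support ∨
          u1 ∈ (P.dropUntil u2 hu2P).support := by
        rw [← Walk.mem_support_append_iff, Walk.take_spec]
        exact hu1P
      obtain ⟨B, hB, hzB⟩ : ∃ B : (Gr Q).Walk u2 u1, B.IsPath ∧ z ∉ B.support := by
        rcases hsplit with ht | hd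
        · refine ⟨((P.takeUntil u2 hu2P).dropUntil u1 ht).reverse,
            (((hP.takeUntil hu2P).dropUntil ht)).reverse, ?_⟩
          rw [Walk.support_reverse, List.mem_reverse]
          intro hmem
          exact hu1ne (start_eq_of_mem_dropUntil (hP.takeUntil hu2P) ht hmem).symm
        · refine ⟨(P.dropUntil u2 hu2P).takeUntil u1 hd,
            ((hP.dropUntil hu2P).takeUntil hd), ?_⟩
          intro hmem
          exact hu2ne (start_eq_of_mem_dropUntil hP hu2P
            (Walk.support_takeUntil_subset _ _ hmem)).symm
      have huniq := isAcyclic_iff_path_unique.mp Q.isTree.IsAcyclic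
        (p := ⟨_, hA⟩) (q := ⟨B, hB⟩)
      have hAB : (((p.takeUntil z hzp).dropUntil u2 hu2p1r).append
          ((p.dropUntil z hzp).takeUntil u1 hu1p2)) = B := congrArg Subtype.val huniq
      rw [hAB] at hzA
      exact hzB hzA

end Stmt8

namespace Stmt8

open Sum SimpleGraph

variable {r : ℕ} {Q : CrQuiver r}

lemma walk_cons_of_ne {z v : VQ Q} (T : (Gr Q).Walk z v) (hzv : z ≠ v) :
    ∃ (w : VQ Q) (h : (Gr Q).Adj z w) (T' : (Gr Q).Walk w v), T = Walk.cons h T' := by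
  cases T with
  | nil => exact absurd rfl hzv
  | cons h T' => exact ⟨_, h, T', rfl⟩

end Stmt8
theorem statement8 {k : Type} [Field k] [IsAlgClosed k] {r : ℕ} (hr : 3 ≤ r)
    (Q : CrQuiver r)
    (M N : CrRep k Q) (hM : M.Indec) (hN : N.Indec)
    (x : Q.Src) (y : Q.Snk) (hx : M.IsLeaf (Sum.inl x)) (hy : N.IsLeaf (Sum.inr y)) :
    ∃ g : CrAut Q, ∃ i0 : Fin r,
      g.et (Q.step x i0) = y ∧ LeafConnected (N.shift g) M x i0 := by
  classical
  open Sum SimpleGraph Stmt8 in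
  -- at most one neighbour of `x` lies in `T(M)`, at most one neighbour of `y` in `T(N)`
  have hMside : ∀ i i' : Fin r, M.inTree (inr (Q.step x i)) →
      M.inTree (inr (Q.step x i')) → i = i' := by
    intro i i' h h'
    have := hx.2 (Set.mem_setOf.mpr ⟨adj_step x i, h⟩)
      (Set.mem_setOf.mpr ⟨adj_step x i', h'⟩)
    exact Q.step_inj x (Sum.inr_injective this)
  have hNside : ∀ i i' : Fin r, N.inTree (inl (Q.back y i)) →
      N.inTree (inl (Q.back y i')) → i = i' := by
    intro i i' h h'
    have := hy.2 (Set.mem_setOf.mpr ⟨adj_back y i, h⟩)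
      (Set.mem_setOf.mpr ⟨adj_back y i', h'⟩)
    exact Q.back_inj y (Sum.inl_injective this)
  obtain ⟨i0, hi0M, hi0N⟩ : ∃ i0 : Fin r,
      ¬ M.inTree (inr (Q.step x i0)) ∧ ¬ N.inTree (inl (Q.back y i0)) := by
    by_contra hcon
    have hall : ∀ i : Fin r,
        M.inTree (inr (Q.step x i)) ∨ N.inTree (inl (Q.back y i)) := by
      intro i
      by_contra hi
      push_neg at hi
      exact hcon ⟨i, hi.1, hi.2⟩
    have h01 : (⟨0, by omega⟩ : Fin r) ≠ ⟨1, by omega⟩ := by simp [Fin.ext_iff]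
    have h02 : (⟨0, by omega⟩ : Fin r) ≠ ⟨2, by omega⟩ := by simp [Fin.ext_iff]
    have h12 : (⟨1, by omega⟩ : Fin r) ≠ ⟨2, by omega⟩ := by simp [Fin.ext_iff]
    rcases hall ⟨0, by omega⟩ with h0 | h0 <;>
      rcases hall ⟨1, by omega⟩ with h1 | h1 <;>
      rcases hall ⟨2, by omega⟩ with h2 | h2 <;>
      first
        | exact absurd (hMside _ _ h0 h1) h01
        | exact absurd (hMside _ _ h0 h2) h02
        | exact absurd (hMside _ _ h1 h2) h12
        | exact absurd (hNside _ _ h0 h1) h01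
        | exact absurd (hNside _ _ h0 h2) h02
        | exact absurd (hNside _ _ h1 h2) h12
  -- the deck transformation sending `x` to `back y i0`
  set g : CrAut Q := autOf Q x (Q.back y i0) with hgdef
  have hesx : g.es x = Q.back y i0 := autOf_root _ _
  have hety : g.et (Q.step x i0) = y := by
    have h := comm' g x i0
    rw [hesx, Q.step_back] at h
    exact h.symm
  refine ⟨g, i0, hety, hx, ?_, ?_⟩
  · -- `inr (step x i0)` is a leaf of `N^g`
    apply IsLeaf_shift_of
    rw [onV_inr, hety]
    exact hy
  · -- the supports are disjoint
    rw [Set.eq_empty_iff_forall_notMem]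
    rintro v ⟨hvM, hvS⟩
    rw [suppSet_shift, Set.mem_preimage] at hvS
    apply hi0M
    by_cases hne : g.onV v = inr y
    · have hveq : v = (inr (Q.step x i0) : VQ Q) := by
        apply g.onV.injective
        rw [hne, onV_inr, hety]
      rw [hveq] at hvM
      exact suppSet_subset_inTree M hvM
    · obtain ⟨T, hTp⟩ : ∃ T : (Gr Q).Walk (inr y) (g.onV v), T.IsPath :=
        ⟨pth Q _ _, pth_isPath _ _⟩
      obtain ⟨w, hadj, T', rfl⟩ :=
        walk_cons_of_ne T (fun h => hne h.symm)
      obtain ⟨j, rfl⟩ := adj_inr_cases hadj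
      have hjtree : N.inTree (inl (Q.back y j)) :=
        inTree_of_path N _ hTp hy.1 hvS _
          (List.mem_cons_of_mem _ (Walk.start_mem_support T'))
      have hji0 : j ≠ i0 := fun hj => hi0N (hj ▸ hjtree)
      set gi : CrAut Q := CrAutInv g with hgidef
      set f : Gr Q →g Gr Q := homOf gi with hfdef
      have hmap1 : f (inr y) = (inr (Q.step x i0) : VQ Q) := by
        apply g.onV.injective
        show g.onV (gi.onV (inr y)) = _
        rw [onV_inv_right, onV_inr, hety]
      have hmap2 : f (g.onV v) = v := onV_inv_left g v
      set ψT : (Gr Q).Walk (inr (Q.step x i0)) v :=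
        ((Walk.cons hadj T').map f).copy hmap1 hmap2 with hψdef
      have hψp : ψT.IsPath := by
        rw [Walk.isPath_copy]
        exact Walk.map_isPath_of_injective (homOf_inj gi) hTp
      have hes : g.es (Q.back (Q.step x i0) j) = Q.back y j := by
        have h := comm' g (Q.back (Q.step x i0) j) j
        rw [Q.step_back, hety] at h
        have hb := Q.back_step (g.es (Q.back (Q.step x i0) j)) j
        rw [h] at hb
        exact hb.symm
      have hval : f (inl (Q.back y j)) = (inl (Q.back (Q.step x i0) j) : VQ Q) := by
        show inl (gi.es (Q.back y j)) = _
        congr 1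
        show g.es.symm (Q.back y j) = _
        rw [← hes, Equiv.symm_apply_apply]
      have hg1 : ψT.getVert 1 = inl (Q.back (Q.step x i0) j) := by
        rw [hψdef, Walk.getVert_copy, Walk.map_cons, Walk.getVert_cons_succ,
          Walk.getVert_zero]
        exact hval
      have hxnot : (inl x : VQ Q) ∉ ψT.support := by
        intro hmem
        have hs := hψp.takeUntil hmem
        have hedge : (Walk.cons ((adj_step x i0).symm) Walk.nil :
            (Gr Q).Walk (inr (Q.step x i0)) (inl x)).IsPath :=
          Walk.IsPath.nil.cons (by simp)
        have heq : ψT.takeUntil (inl x) hmem =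
            Walk.cons ((adj_step x i0).symm) Walk.nil :=
          (pth_unique hs).trans (pth_unique hedge).symm
        have hspec := Walk.take_spec ψT hmem
        rw [heq, Walk.cons_append, Walk.nil_append] at hspec
        have hgv : ψT.getVert 1 = inl x := by
          rw [← hspec, Walk.getVert_cons_succ, Walk.getVert_zero]
        rw [hg1] at hgv
        have hbb : Q.back (Q.step x i0) j = Q.back (Q.step x i0) i0 := by
          rw [Q.back_step]
          exact Sum.inl_injective hgv
        exact hji0 (Q.back_inj _ hbb)
      have hW : (Walk.cons (adj_step x i0) ψT).IsPath := hψp.cons hxnot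
      exact inTree_of_path M _ hW hx.1 hvM _
        (List.mem_cons_of_mem _ (Walk.start_mem_support ψT))
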